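/- For every real 3×3 matrix F with det F > 0 the Neo-Hookean free energy density ψ₀ is Fréchet differentiable at F, and its derivative in an arbitrary matrix direction H equals trace(P₀(F)ᵀ * H); equivalently, the gradient of ψ₀ with respect to the Frobenius inner product is the first Piola–Kirchhoff stress P₀(F) = μ(F − (det F)^(−β) F⁻ᵀ). -/

import Mathlib

open Matrix

noncomputable section

attribute [local instance]
  Matrix.frobeniusNormedAddCommGroup Matrix.frobeniusNormedSpace

/-- The Neo-Hookean free energy density
`ψ₀(F) = (μ/2)(trace(Fᵀ F) − 3) + (μ/β)((det F)^(−β) − 1)`. -/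
def neoHookeanEnergy (μ β : ℝ) (F : Matrix (Fin 3) (Fin 3) ℝ) : ℝ :=
  μ / 2 * ((Fᵀ * F).trace - 3) + μ / β * (F.det ^ (-β) - 1)

/-- The first Piola–Kirchhoff stress `P₀(F) = μ (F − (det F)^(−β) F⁻ᵀ)`. -/
def firstPiolaKirchhoff (μ β : ℝ) (F : Matrix (Fin 3) (Fin 3) ℝ) :
    Matrix (Fin 3) (Fin 3) ℝ :=
  μ • (F - F.det ^ (-β) • (F⁻¹)ᵀ)

/-- The entry map `M ↦ M i j` as a continuous linear map. -/
def entryCLM (i j : Fin 3) : Matrix (Fin 3) (Fin 3) ℝ →L[ℝ] ℝ :=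
  LinearMap.toContinuousLinearMap
    { toFun := fun M => M i j
      map_add' := fun _ _ => rfl
      map_smul' := fun _ _ => rfl }

@[simp] lemma entryCLM_apply (i j : Fin 3) (M : Matrix (Fin 3) (Fin 3) ℝ) :
    entryCLM i j M = M i j := rfl

/-- The candidate gradient pairing `H ↦ trace (P₀(F)ᵀ * H)` as a CLM. -/
def pkCLM (μ β : ℝ) (F : Matrix (Fin 3) (Fin 3) ℝ) : Matrix (Fin 3) (Fin 3) ℝ →L[ℝ] ℝ :=
  LinearMap.toContinuousLinearMap
    { toFun := fun H => ((firstPiolaKirchhoff μ β F)ᵀ * H).trace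
      map_add' := fun a b => by simp [Matrix.mul_add]
      map_smul' := fun c a => by simp [Matrix.mul_smul] }

@[simp] lemma pkCLM_apply (μ β : ℝ) (F H : Matrix (Fin 3) (Fin 3) ℝ) :
    pkCLM μ β F H = ((firstPiolaKirchhoff μ β F)ᵀ * H).trace := rfl

/-- For every real 3×3 matrix `F` with `det F > 0`, the Neo-Hookean free energy
density `ψ₀` is Fréchet differentiable at `F`, and its derivative in an arbitrary
matrix direction `H` equals `trace (P₀(F)ᵀ * H)`; i.e. the gradient of `ψ₀` with
respect to the Frobenius inner product is the first Piola–Kirchhoff stress. -/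
theorem neoHookeanEnergy_hasFDerivAt (μ β : ℝ) (hμ : 0 < μ) (hβ : β ≠ 0)
    (F : Matrix (Fin 3) (Fin 3) ℝ) (hF : 0 < F.det) :
    ∃ L : Matrix (Fin 3) (Fin 3) ℝ →L[ℝ] ℝ,
      HasFDerivAt (neoHookeanEnergy μ β) L F ∧
      ∀ H : Matrix (Fin 3) (Fin 3) ℝ,
        L H = ((firstPiolaKirchhoff μ β F)ᵀ * H).trace := by
  classical
  refine ⟨pkCLM μ β F, ?_, fun H => rfl⟩
  have h00 := (entryCLM 0 0).hasFDerivAt (x := F)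
  have h01 := (entryCLM 0 1).hasFDerivAt (x := F)
  have h02 := (entryCLM 0 2).hasFDerivAt (x := F)
  have h10 := (entryCLM 1 0).hasFDerivAt (x := F)
  have h11 := (entryCLM 1 1).hasFDerivAt (x := F)
  have h12 := (entryCLM 1 2).hasFDerivAt (x := F)
  have h20 := (entryCLM 2 0).hasFDerivAt (x := F)
  have h21 := (entryCLM 2 1).hasFDerivAt (x := F)
  have h22 := (entryCLM 2 2).hasFDerivAt (x := F)
  -- derivative of the determinant
  have hdet' := ((((((h00.mul h11).mul h22).sub ((h00.mul h12).mul h21)).sub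
      ((h01.mul h10).mul h22)).add ((h01.mul h12).mul h20)).add
      ((h02.mul h10).mul h21)).sub ((h02.mul h11).mul h20)
  have hdet := hdet'.congr_of_eventuallyEq
    (Filter.Eventually.of_forall fun M : Matrix (Fin 3) (Fin 3) ℝ =>
      (Matrix.det_fin_three M))
  -- derivative of the trace term
  have hq' := ((((h00.mul h00).add (h10.mul h10)).add (h20.mul h20)).add
      (((h01.mul h01).add (h11.mul h11)).add (h21.mul h21))).add
      (((h02.mul h02).add (h12.mul h12)).add (h22.mul h22))
  have hq := hq'.congr_of_eventuallyEq
    (f₁ := fun M : Matrix (Fin 3) (Fin 3) ℝ => (Mᵀ * M).trace)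
    (Filter.Eventually.of_forall fun M : Matrix (Fin 3) (Fin 3) ℝ => by
      simp [Matrix.trace_fin_three, Matrix.mul_apply, Fin.sum_univ_three])
  have hA := (hq.sub_const (3 : ℝ)).const_mul (μ / 2)
  -- derivative of the rpow term
  have hr : HasDerivAt (fun x : ℝ => μ / β * (x ^ (-β) - 1))
      (μ / β * (-β * F.det ^ (-β - 1))) F.det :=
    ((Real.hasDerivAt_rpow_const (Or.inl hF.ne')).sub_const 1).const_mul (μ / β)
  have hB := hr.comp_hasFDerivAt F hdet
  have hψ := hA.add hB
  show HasFDerivAt (fun M : Matrix (Fin 3) (Fin 3) ℝ =>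
    μ / 2 * ((Mᵀ * M).trace - 3) + μ / β * (M.det ^ (-β) - 1)) (pkCLM μ β F) F
  refine hψ.congr_fderiv ?_
  ext H
  change μ / 2 * (F 0 0 * H 0 0 + F 0 0 * H 0 0 + (F 1 0 * H 1 0 + F 1 0 * H 1 0) +
        (F 2 0 * H 2 0 + F 2 0 * H 2 0) +
      (F 0 1 * H 0 1 + F 0 1 * H 0 1 + (F 1 1 * H 1 1 + F 1 1 * H 1 1) +
        (F 2 1 * H 2 1 + F 2 1 * H 2 1)) +
      (F 0 2 * H 0 2 + F 0 2 * H 0 2 + (F 1 2 * H 1 2 + F 1 2 * H 1 2) +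
        (F 2 2 * H 2 2 + F 2 2 * H 2 2))) +
    μ / β * (-β * F.det ^ (-β - 1)) *
      (F 0 0 * F 1 1 * H 2 2 + F 2 2 * (F 0 0 * H 1 1 + F 1 1 * H 0 0)
        - (F 0 0 * F 1 2 * H 2 1 + F 2 1 * (F 0 0 * H 1 2 + F 1 2 * H 0 0))
        - (F 0 1 * F 1 0 * H 2 2 + F 2 2 * (F 0 1 * H 1 0 + F 1 0 * H 0 1))
        + (F 0 1 * F 1 2 * H 2 0 + F 2 0 * (F 0 1 * H 1 2 + F 1 2 * H 0 1))
        + (F 0 2 * F 1 0 * H 2 1 + F 2 1 * (F 0 2 * H 1 0 + F 1 0 * H 0 2))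
        - (F 0 2 * F 1 1 * H 2 0 + F 2 0 * (F 0 2 * H 1 1 + F 1 1 * H 0 2))) =
    ((firstPiolaKirchhoff μ β F)ᵀ * H).trace
  rw [firstPiolaKirchhoff, Matrix.inv_def, Ring.inverse_eq_inv',
    Real.rpow_sub_one hF.ne', Matrix.adjugate_fin_three]
  simp only [Matrix.transpose_smul, Matrix.transpose_sub, Matrix.smul_mul,
    Matrix.sub_mul, Matrix.trace_smul, Matrix.trace_sub, smul_eq_mul,
    Matrix.trace_fin_three, Matrix.mul_apply, Fin.sum_univ_three,
    Matrix.transpose_apply, Matrix.sub_apply, Matrix.smul_apply,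
    Matrix.transpose_transpose, Matrix.cons_val', Matrix.cons_val_zero,
    Matrix.cons_val_one, Matrix.head_cons, Matrix.empty_val',
    Matrix.cons_val_fin_one, Matrix.head_fin_const,
    Matrix.of_apply, Matrix.cons_val_two, Matrix.tail_cons]
  field_simp
  ring
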